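/- Let (X, 𝓔) be a coarse space, S ⊆ X, and θ a Ponzi scheme supported in S×S, i.e., ∂_S θ ≥ 0 and there is E' ∈ 𝓔 with Σ_{s ∈ E'_{x₀} ∩ S} ∂_S θ(s) ≥ 1 for all x₀ ∈ X. Suppose E is a measurable controlled set with μ(E_s) = C > 0 for all s ∈ S, and let c be as above with ∂_X c = C·Σ_{s∈S}(∂_S θ)(s)·χ_{E_s}. Then ∂_X c ≥ 0, and for any measurable controlled set Ẽ' ⊇ E' ∘ E one has ∫_{(Ẽ')_{x₀}} ∂_X c dμ ≥ C² for every x₀ ∈ X; hence c/C² is a μ-Ponzi scheme. -/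

import Mathlib

open MeasureTheory

/-- A coarse structure on `X` (Roe). -/
structure CoarseStructure (X : Type*) where
  sets : Set (Set (X × X))
  diag_mem : {p : X × X | p.1 = p.2} ∈ sets
  subset_mem : ∀ E E' : Set (X × X), E' ∈ sets → E ⊆ E' → E ∈ sets
  union_mem : ∀ E₁ E₂ : Set (X × X), E₁ ∈ sets → E₂ ∈ sets → E₁ ∪ E₂ ∈ sets
  comp_mem : ∀ E₁ E₂ : Set (X × X), E₁ ∈ sets → E₂ ∈ sets →
    {p : X × X | ∃ y, (p.1, y) ∈ E₁ ∧ (y, p.2) ∈ E₂} ∈ sets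
  transpose_mem : ∀ E : Set (X × X), E ∈ sets → {p : X × X | (p.2, p.1) ∈ E} ∈ sets

/-- Composition of entourages. -/
def relComp {X : Type*} (E1 E2 : Set (X × X)) : Set (X × X) :=
  {p | ∃ y, (p.1, y) ∈ E1 ∧ (y, p.2) ∈ E2}

/-- The section `E_x = {y : (x,y) ∈ E}`. -/
def relSec {X : Type*} (E : Set (X × X)) (x : X) : Set X := {y | (x, y) ∈ E}

/-- `S` is uniformly locally finite. -/
def UniformLocallyFinite {X : Type*} (𝓔 : CoarseStructure X) (S : Set X) : Prop :=
  ∀ E ∈ 𝓔.sets, ∃ N : ℕ, ∀ x : X, (relSec E x ∩ S).Finite ∧ (relSec E x ∩ S).ncard ≤ N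

/-- The combinatorial boundary of a 1-chain over `S`. -/
noncomputable def boundaryS {X : Type*} (S : Set X) (θ : X × X → ℝ) (s : X) : ℝ :=
  (∑ᶠ s' ∈ S, θ (s', s)) - ∑ᶠ s' ∈ S, θ (s, s')

/-- The integral boundary against `μ`. -/
noncomputable def boundaryX {X : Type*} [MeasurableSpace X] (μ : Measure X)
    (c : X × X → ℝ) (x : X) : ℝ :=
  (∫ y, c (y, x) ∂μ) - ∫ y, c (x, y) ∂μ

theorem smeared_Ponzi_scheme_is_mu_PS {X : Type*} [MeasurableSpace X]
    (μ : Measure X) [SigmaFinite μ] (𝓔 : CoarseStructure X)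
    (huniform : ∀ F ∈ 𝓔.sets, MeasurableSet F →
      ∃ K : ENNReal, K ≠ ⊤ ∧ ∀ x : X, μ (relSec F x) ≤ K)
    (S : Set X) (hS : UniformLocallyFinite 𝓔 S)
    -- θ is a Ponzi scheme supported in S × S
    (θ : X × X → ℝ) (M : ℝ) (hθbd : ∀ p : X × X, |θ p| ≤ M)
    (Eθ : Set (X × X)) (hEθ : Eθ ∈ 𝓔.sets)
    (hsupp : ∀ p : X × X, θ p ≠ 0 → p.1 ∈ S ∧ p.2 ∈ S ∧ p ∈ Eθ)
    (hpos : ∀ s : X, 0 ≤ boundaryS S θ s)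
    (E' : Set (X × X)) (hE' : E' ∈ 𝓔.sets)
    (heff : ∀ x₀ : X, 1 ≤ ∑ᶠ s ∈ relSec E' x₀ ∩ S, boundaryS S θ s)
    -- E is a measurable controlled set constant on S
    (E : Set (X × X)) (hE : E ∈ 𝓔.sets) (hEmeas : MeasurableSet E)
    (C : ℝ) (hC : 0 < C) (hconst : ∀ s ∈ S, μ (relSec E s) = ENNReal.ofReal C)
    -- c is the smeared chain, whose boundary is as computed before
    (c : X × X → ℝ) (hcmeas : Measurable c)
    (hboundary : ∀ x : X, boundaryX μ c x =
      C * ∑ᶠ s ∈ S, boundaryS S θ s * Set.indicator (relSec E s) (fun _ => (1 : ℝ)) x) :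
    (∀ x : X, 0 ≤ boundaryX μ c x) ∧
    ∀ Etil ∈ 𝓔.sets, MeasurableSet Etil → relComp E' E ⊆ Etil →
      ∀ x₀ : X, C ^ 2 ≤ ∫ x in relSec Etil x₀, boundaryX μ c x ∂μ := by
  have hb : ∀ s : X, 0 ≤ boundaryS S θ s := hpos
  have part1 : ∀ x : X, 0 ≤ boundaryX μ c x := by
    intro x
    rw [hboundary x]
    refine mul_nonneg hC.le ?_
    rw [finsum_mem_def]
    refine finsum_nonneg fun s => ?_
    exact Set.indicator_nonneg
      (fun s' _ => mul_nonneg (hpos s')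
        (Set.indicator_nonneg (fun _ _ => zero_le_one) x)) s
  refine ⟨part1, ?_⟩
  intro Etil hEtil hEtilMeas hsub x₀
  set A := relSec Etil x₀ with hAdef
  have hAmeas : MeasurableSet A := measurable_prodMk_left hEtilMeas
  -- the big entourage Etil ∘ Eᵀ
  have hbig : relComp Etil {p : X × X | (p.2, p.1) ∈ E} ∈ 𝓔.sets :=
    𝓔.comp_mem _ _ hEtil (𝓔.transpose_mem E hE)
  obtain ⟨N, hN⟩ := hS _ hbig
  have hT₀fin : (relSec (relComp Etil {p : X × X | (p.2, p.1) ∈ E}) x₀ ∩ S).Finite := (hN x₀).1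
  set T₀ : Finset X := hT₀fin.toFinset with hT₀def
  have hT₀mem : ∀ s : X, s ∈ T₀ ↔
      s ∈ relSec (relComp Etil {p : X × X | (p.2, p.1) ∈ E}) x₀ ∩ S := fun s =>
    Set.Finite.mem_toFinset _
  obtain ⟨N', hN'⟩ := hS E' hE'
  have hT'fin : (relSec E' x₀ ∩ S).Finite := (hN' x₀).1
  set T' : Finset X := hT'fin.toFinset with hT'def
  have hT'mem : ∀ s : X, s ∈ T' ↔ s ∈ relSec E' x₀ ∩ S := fun s => Set.Finite.mem_toFinset _
  -- sections of E are measurable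
  have hEsec : ∀ s : X, MeasurableSet (relSec E s) := fun s => measurable_prodMk_left hEmeas
  -- for s ∈ T', the section E_s is contained in A
  have hsubA : ∀ s ∈ T', relSec E s ⊆ A := by
    intro s hs x hx
    obtain ⟨hs1, _⟩ := (hT'mem s).1 hs
    exact hsub ⟨s, hs1, hx⟩
  -- T' ⊆ T₀
  have hT'T₀ : T' ⊆ T₀ := by
    intro s hs
    obtain ⟨hs1, hs2⟩ := (hT'mem s).1 hs
    have hne : (relSec E s).Nonempty := by
      refine MeasureTheory.nonempty_of_measure_ne_zero (μ := μ) ?_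
      rw [hconst s hs2]
      simp [ENNReal.ofReal_eq_zero, not_le, hC]
    obtain ⟨x, hx⟩ := hne
    exact (hT₀mem s).2 ⟨⟨x, hsubA s hs hx, hx⟩, hs2⟩
  -- the finite-sum representative of the boundary on A
  set h : X → ℝ := fun x => ∑ s ∈ T₀, Set.indicator (relSec E s) (fun _ => boundaryS S θ s) x
    with hhdef
  have heq : ∀ x ∈ A, boundaryX μ c x = C * h x := by
    intro x hx
    rw [hboundary x]
    congr 1
    rw [hhdef]
    have : ∀ s : X, Set.indicator (relSec E s) (fun _ => boundaryS S θ s) x =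
        boundaryS S θ s * Set.indicator (relSec E s) (fun _ => (1 : ℝ)) x := by
      intro s
      by_cases hxs : x ∈ relSec E s <;> simp [Set.indicator_apply, hxs]
    simp_rw [this]
    refine finsum_mem_eq_sum_of_inter_support_eq _ ?_
    ext s
    simp only [Set.mem_inter_iff, Function.mem_support, Finset.coe_sort_coe, Finset.mem_coe,
      hT₀mem]
    constructor
    · rintro ⟨hsS, hne⟩
      have hxE : x ∈ relSec E s := by
        by_contra hxe
        simp [Set.indicator_of_notMem hxe] at hne
      exact ⟨⟨⟨x, hx, hxE⟩, hsS⟩, hne⟩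
    · rintro ⟨⟨_, hsS⟩, hne⟩
      exact ⟨hsS, hne⟩
  have hInt : ∀ s ∈ T₀, Integrable
      (fun x => Set.indicator (relSec E s) (fun _ => boundaryS S θ s) x) (μ.restrict A) := by
    intro s hs
    obtain ⟨_, hsS⟩ := (hT₀mem s).1 hs
    refine Integrable.restrict ?_
    rw [integrable_indicator_iff (hEsec s)]
    refine integrableOn_const (hs := ?_)
    rw [hconst s hsS]
    exact ENNReal.ofReal_ne_top
  have hintA : ∫ x in A, boundaryX μ c x ∂μ = C * ∑ s ∈ T₀,
      (μ (A ∩ relSec E s)).toReal * boundaryS S θ s := by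
    rw [setIntegral_congr_fun hAmeas heq, integral_const_mul]
    congr 1
    rw [hhdef, integral_finset_sum _ hInt]
    refine Finset.sum_congr rfl fun s _ => ?_
    rw [setIntegral_indicator (hEsec s), setIntegral_const, smul_eq_mul, measureReal_def]
  rw [hintA]
  have hstep : ∀ s ∈ T', (μ (A ∩ relSec E s)).toReal * boundaryS S θ s =
      C * boundaryS S θ s := by
    intro s hs
    obtain ⟨_, hsS⟩ := (hT'mem s).1 hs
    rw [Set.inter_eq_right.2 (hsubA s hs), hconst s hsS, ENNReal.toReal_ofReal hC.le]
  have hmono : ∑ s ∈ T', (μ (A ∩ relSec E s)).toReal * boundaryS S θ s ≤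
      ∑ s ∈ T₀, (μ (A ∩ relSec E s)).toReal * boundaryS S θ s := by
    refine Finset.sum_le_sum_of_subset_of_nonneg hT'T₀ fun s _ _ =>
      mul_nonneg ENNReal.toReal_nonneg (hpos s)
  have hsum1 : (1 : ℝ) ≤ ∑ s ∈ T', boundaryS S θ s := by
    have := heff x₀
    rwa [← hT'fin.coe_toFinset, finsum_mem_coe_finset] at this
  calc C ^ 2 = C * (C * 1) := by ring
    _ ≤ C * (C * ∑ s ∈ T', boundaryS S θ s) := by
        refine mul_le_mul_of_nonneg_left (mul_le_mul_of_nonneg_left hsum1 hC.le) hC.le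
    _ = C * ∑ s ∈ T', (μ (A ∩ relSec E s)).toReal * boundaryS S θ s := by
        rw [Finset.mul_sum]; congr 1; exact (Finset.sum_congr rfl hstep).symm
    _ ≤ C * ∑ s ∈ T₀, (μ (A ∩ relSec E s)).toReal * boundaryS S θ s :=
        mul_le_mul_of_nonneg_left hmono hC.le
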